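/- For any finite set ℬ of gradient directions, positive scalars S̄_b, and vectors x_b ∈ ℝ⁶ such that Σ_b x_b x_b^T is invertible, the asymptotic covariance of the nonlinear regression estimator is dominated by that of the linear estimator: (Σ_b S̄_b² x_b x_b^T)⁻¹ ⪯ (Σ_b x_b x_b^T)⁻¹ (Σ_b S̄_b^{−2} x_b x_b^T)(Σ_b x_b x_b^T)⁻¹ in the positive semidefinite order (assuming both sums Σ S̄_b² x_b x_b^T and Σ x_b x_b^T are invertible). -/

import Mathlib

open Matrix

lemma quad_helper {B : Type*} [Fintype B] (c : B → ℝ) (x : B → Fin 6 → ℝ)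
    (u v : Fin 6 → ℝ) :
    u ⬝ᵥ ((∑ b, c b • vecMulVec (x b) (x b)) *ᵥ v)
      = ∑ b, c b * ((x b ⬝ᵥ u) * (x b ⬝ᵥ v)) := by
  simp only [Matrix.mulVec, dotProduct, Matrix.sum_apply, Matrix.smul_apply,
    vecMulVec_apply, smul_eq_mul, Finset.mul_sum, Finset.sum_mul]
  have h1 : ∀ i : Fin 6, (∑ j : Fin 6, ∑ b : B, u i * (c b * (x b i * x b j) * v j))
      = ∑ b : B, ∑ j : Fin 6, u i * (c b * (x b i * x b j) * v j) :=
    fun i => Finset.sum_comm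
  simp_rw [h1]
  rw [Finset.sum_comm]
  refine Finset.sum_congr rfl fun b _ => ?_
  rw [Finset.sum_comm]
  refine Finset.sum_congr rfl fun i _ => Finset.sum_congr rfl fun j _ => by ring

lemma sym_dot {n : Type*} [Fintype n] {P : Matrix n n ℝ} (hP : Pᵀ = P) (a b : n → ℝ) :
    a ⬝ᵥ (P *ᵥ b) = (P *ᵥ a) ⬝ᵥ b := by
  rw [Matrix.dotProduct_mulVec, ← hP, Matrix.vecMul_transpose, hP]

lemma herm_helper {B : Type*} [Fintype B] (c : B → ℝ) (x : B → Fin 6 → ℝ) :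
    (∑ b, c b • vecMulVec (x b) (x b)).IsHermitian := by
  show _ᴴ = _
  ext i j
  simp [Matrix.conjTranspose_apply, Matrix.sum_apply, vecMulVec_apply, mul_comm, mul_left_comm]

/-- For a finite set `ℬ` of gradient directions, positive scalars `S̄ b`
and vectors `x b ∈ ℝ⁶` such that `∑ b, x_b x_bᵀ` and `∑ b, S̄_b² x_b x_bᵀ` are invertible,
the asymptotic covariance of the nonlinear regression estimator is dominated, in the
Loewner (positive semidefinite) order, by that of the linear estimator:
`(∑ b, S̄_b² x_b x_bᵀ)⁻¹ ⪯ (∑ b, x_b x_bᵀ)⁻¹ (∑ b, S̄_b⁻² x_b x_bᵀ) (∑ b, x_b x_bᵀ)⁻¹`. -/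
theorem nonlinear_vs_linear_asymptotic_covariance
    {B : Type*} [Fintype B]
    (S : B → ℝ) (hS : ∀ b, 0 < S b) (x : B → Fin 6 → ℝ)
    (hA : IsUnit (∑ b, vecMulVec (x b) (x b)).det)
    (hM : IsUnit (∑ b, (S b) ^ 2 • vecMulVec (x b) (x b)).det) :
    ((∑ b, vecMulVec (x b) (x b))⁻¹
        * (∑ b, ((S b) ^ 2)⁻¹ • vecMulVec (x b) (x b))
        * (∑ b, vecMulVec (x b) (x b))⁻¹
      - (∑ b, (S b) ^ 2 • vecMulVec (x b) (x b))⁻¹).PosSemidef := by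
  have hA1 : (∑ b, vecMulVec (x b) (x b)) = ∑ b, (1 : ℝ) • vecMulVec (x b) (x b) := by
    simp
  set A : Matrix (Fin 6) (Fin 6) ℝ := ∑ b, vecMulVec (x b) (x b) with hAdef
  set M : Matrix (Fin 6) (Fin 6) ℝ := ∑ b, (S b) ^ 2 • vecMulVec (x b) (x b) with hMdef
  set N : Matrix (Fin 6) (Fin 6) ℝ := ∑ b, ((S b) ^ 2)⁻¹ • vecMulVec (x b) (x b) with hNdef
  have hAH : A.IsHermitian := hA1 ▸ herm_helper _ x
  have hMH : M.IsHermitian := herm_helper _ x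
  have hNH : N.IsHermitian := herm_helper _ x
  have hAiH : A⁻¹.IsHermitian := hAH.inv
  have hMiH : M⁻¹.IsHermitian := hMH.inv
  have hAiT : (A⁻¹)ᵀ = A⁻¹ := hAiH
  have hMiT : (M⁻¹)ᵀ = M⁻¹ := hMiH
  have hAT : Aᵀ = A := hAH
  have hMT : Mᵀ = M := hMH
  rw [posSemidef_iff_dotProduct_mulVec]
  constructor
  · show _ᴴ = _
    rw [conjTranspose_sub, conjTranspose_mul, conjTranspose_mul, hAiH.eq, hMiH.eq, hNH.eq,
      mul_assoc]
  · intro v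
    simp only [star_trivial]
    set u : Fin 6 → ℝ := A⁻¹ *ᵥ v with hu
    set w : Fin 6 → ℝ := M⁻¹ *ᵥ v with hw
    have hvA : A *ᵥ u = v := by
      rw [hu, Matrix.mulVec_mulVec, Matrix.mul_nonsing_inv _ hA, Matrix.one_mulVec]
    have hvM : M *ᵥ w = v := by
      rw [hw, Matrix.mulVec_mulVec, Matrix.mul_nonsing_inv _ hM, Matrix.one_mulVec]
    -- rewrite the quadratic form
    have hqf : v ⬝ᵥ ((A⁻¹ * N * A⁻¹ - M⁻¹) *ᵥ v)
        = u ⬝ᵥ (N *ᵥ u) - v ⬝ᵥ w := by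
      rw [Matrix.sub_mulVec, dotProduct_sub, mul_assoc, ← Matrix.mulVec_mulVec,
        ← Matrix.mulVec_mulVec, sym_dot hAiT, ← hu, ← hw]
    rw [hqf]
    -- key scalars
    set t : ℝ := v ⬝ᵥ w with ht
    have htM : t = ∑ b, (S b) ^ 2 * ((x b ⬝ᵥ w) * (x b ⬝ᵥ w)) := by
      rw [ht, ← hvM, dotProduct_comm, sym_dot hMT, dotProduct_comm, hMdef]
      exact quad_helper _ x w w
    have htA : t = ∑ b, (1 : ℝ) * ((x b ⬝ᵥ u) * (x b ⬝ᵥ w)) := by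
      rw [ht, ← hvA, dotProduct_comm, sym_dot hAT, dotProduct_comm, hA1]
      exact quad_helper _ x u w
    have hq : u ⬝ᵥ (N *ᵥ u) = ∑ b, ((S b) ^ 2)⁻¹ * ((x b ⬝ᵥ u) * (x b ⬝ᵥ u)) := by
      rw [hNdef]; exact quad_helper _ x u u
    have hqnn : 0 ≤ u ⬝ᵥ (N *ᵥ u) := by
      rw [hq]
      refine Finset.sum_nonneg fun b _ => ?_
      have : 0 ≤ ((S b) ^ 2)⁻¹ := by positivity
      nlinarith [sq_nonneg (x b ⬝ᵥ u), mul_self_nonneg (x b ⬝ᵥ u)]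
    have htnn : 0 ≤ t := by
      rw [htM]
      refine Finset.sum_nonneg fun b _ => ?_
      nlinarith [sq_nonneg (S b), mul_self_nonneg (x b ⬝ᵥ w)]
    -- Cauchy–Schwarz
    have hcs : t ^ 2 ≤ (u ⬝ᵥ (N *ᵥ u)) * t := by
      have key := Finset.sum_mul_sq_le_sq_mul_sq Finset.univ
        (fun b => (S b)⁻¹ * (x b ⬝ᵥ u)) (fun b => S b * (x b ⬝ᵥ w))
      have e1 : (∑ b, ((S b)⁻¹ * (x b ⬝ᵥ u)) * (S b * (x b ⬝ᵥ w))) = t := by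
        rw [htA]
        refine Finset.sum_congr rfl fun b _ => ?_
        have hsb : (S b)⁻¹ * S b = 1 := inv_mul_cancel₀ (hS b).ne'
        linear_combination (x b ⬝ᵥ u * x b ⬝ᵥ w) * hsb
      have e2 : (∑ b, ((S b)⁻¹ * (x b ⬝ᵥ u)) ^ 2) = u ⬝ᵥ (N *ᵥ u) := by
        rw [hq]
        refine Finset.sum_congr rfl fun b _ => ?_
        rw [mul_pow, ← inv_pow]
        ring
      have e3 : (∑ b, (S b * (x b ⬝ᵥ w)) ^ 2) = t := by
        rw [htM]
        refine Finset.sum_congr rfl fun b _ => ?_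
        rw [mul_pow]
        ring
      rw [e1, e2, e3] at key
      exact key
    rcases eq_or_lt_of_le htnn with h0 | hpos
    · rw [← h0]
      simpa using hqnn
    · have : t ≤ u ⬝ᵥ (N *ᵥ u) := by
        have := hcs
        rw [sq] at this
        exact le_of_mul_le_mul_right this hpos
      linarith
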